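/- arXiv:2407.16987 — 3 statements merged into one kernel-verified Lean document; each statement's English description precedes it below -/
import Mathlib

section
/- Any operator T on the space of bounded functions W : X → ℝ (sup norm) satisfying (i) monotonicity: W ≤ U pointwise implies TW ≤ TU pointwise, and (ii) discounting: there exists β ∈ (0,1) with T(W + a) ≤ TW + βa for every constant a ≥ 0, is a contraction with Lipschitz constant β (Blackwell's sufficient conditions). -/
/-- Blackwell's sufficient conditions: an operator on bounded functions that is
monotone and satisfies discounting with factor `β ∈ (0,1)` is a contraction
with Lipschitz constant `β` in the sup metric. -/
theorem blackwell_sufficient_conditions {X : Type*} [Nonempty X]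
    (T : (X → ℝ) → (X → ℝ)) (beta : ℝ) (hbeta : beta ∈ Set.Ioo (0:ℝ) 1)
    (hmono : ∀ W U : X → ℝ, (∃ B, ∀ x, |W x| ≤ B) → (∃ B, ∀ x, |U x| ≤ B) →
      (∀ x, W x ≤ U x) → ∀ x, T W x ≤ T U x)
    (hdisc : ∀ (W : X → ℝ), (∃ B, ∀ x, |W x| ≤ B) → ∀ a : ℝ, 0 ≤ a →
      ∀ x, T (fun y => W y + a) x ≤ T W x + beta * a) :
    ∀ W U : X → ℝ, (∃ B, ∀ x, |W x| ≤ B) → (∃ B, ∀ x, |U x| ≤ B) →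
      ∀ C : ℝ, 0 ≤ C → (∀ x, |W x - U x| ≤ C) →
      ∀ x, |T W x - T U x| ≤ beta * C := by
  have key : ∀ W U : X → ℝ, (∃ B, ∀ x, |W x| ≤ B) → (∃ B, ∀ x, |U x| ≤ B) →
      ∀ C : ℝ, 0 ≤ C → (∀ x, W x - U x ≤ C) → ∀ x, T W x - T U x ≤ beta * C := by
    intro W U ⟨BW, hBW⟩ ⟨BU, hBU⟩ C hC hWU x
    have hUC : ∃ B, ∀ x, |U x + C| ≤ B :=
      ⟨BU + C, fun x => (abs_add_le _ _).trans (by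
        have := hBU x; have : |C| = C := abs_of_nonneg hC; linarith [hBU x, abs_of_nonneg hC])⟩
    have h1 : T W x ≤ T (fun y => U y + C) x :=
      hmono W (fun y => U y + C) ⟨BW, hBW⟩ hUC (fun y => show W y ≤ U y + C by linarith [hWU y]) x
    have h2 : T (fun y => U y + C) x ≤ T U x + beta * C :=
      hdisc U ⟨BU, hBU⟩ C hC x
    linarith
  intro W U hW hU C hC h x
  have h1 := key W U hW hU C hC (fun y => (abs_le.mp (h y)).2) x
  have h2 := key U W hU hW C hC (fun y => by
    have := (abs_le.mp (h y)).1; linarith) x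
  rw [abs_le]; constructor <;> linarith
end

section
/- Suppose u : S × [0,Q̄] → ℝ, W : D → ℝ are bounded, u and W are non-increasing in s (for each fixed other argument), P : S → [0,1] is non-decreasing in s, and δ ∈ (0,1). Then (TW)(s,Q) = max{ sup_{q∈[0,Q]}[(1-P(s))(u(s,q)+δW(λs+q,Q)) + P(s)(u(s,Q)+δW(λs+Q,Q))], u_R(s)+δW(λs,Q) } is non-increasing in s whenever u_R is non-increasing in s. Key step: since q = Q is feasible, sup_{q∈[0,Q]}[u(s,q)+δW(λs+q,Q)] ≥ u(s,Q)+δW(λs+Q,Q), so shifting probability mass to the triggered term weakly lowers the value. -/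
/-- The Bellman value-iteration operator of the cue-triggered addiction model. -/
noncomputable def bellmanT (lam delta : ℝ) (P : ℝ → ℝ) (u : ℝ → ℝ → ℝ)
    (uR : ℝ → ℝ) (W : ℝ → ℝ → ℝ) (s Q : ℝ) : ℝ :=
  max
    (sSup {v : ℝ | ∃ q ∈ Set.Icc (0:ℝ) Q,
      v = (1 - P s) * (u s q + delta * W (lam * s + q) Q)
        + P s * (u s Q + delta * W (lam * s + Q) Q)})
    (uR s + delta * W (lam * s) Q)


private lemma combo_mono (p x y x' y' : ℝ) (hp0 : 0 ≤ p) (hp1 : p ≤ 1)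
    (hx : x' ≤ x) (hy : y' ≤ y) :
    (1 - p) * x' + p * y' ≤ (1 - p) * x + p * y := by nlinarith

private lemma combo_shift (p p' x y : ℝ) (hpp' : p ≤ p') (h : y ≤ x) :
    (1 - p') * x + p' * y ≤ (1 - p) * x + p * y := by nlinarith

private lemma combo_top (p p' x y : ℝ) (hp' : p' ≤ 1) (h : x ≤ y) :
    (1 - p') * x + p' * y ≤ (1 - p) * y + p * y := by nlinarith

/-- Value iteration preserves monotone-decreasingness in the addictive state:
if `u`, `uR`, `W` are non-increasing in `s` and `P` is non-decreasing in `s`,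
then `TW` is non-increasing in `s` on `D`. -/
theorem bellman_preserves_antitone_in_s (lam delta Qbar : ℝ)
    (hlam : lam ∈ Set.Ioo (0:ℝ) 1) (hdelta : delta ∈ Set.Ioo (0:ℝ) 1)
    (P : ℝ → ℝ) (hP : ∀ s, P s ∈ Set.Icc (0:ℝ) 1)
    (hPmono : ∀ s s' : ℝ, 0 ≤ s → s ≤ s' → s' ≤ Qbar / (1 - lam) →
      P s ≤ P s')
    (u : ℝ → ℝ → ℝ) (uR W : ℝ → ℝ → ℝ)
    (hu_bdd : ∃ B, ∀ s q, |u s q| ≤ B) (hW_bdd : ∃ B, ∀ s Q, |W s Q| ≤ B)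
    (hu_mono : ∀ q, ∀ s s' : ℝ, 0 ≤ s → s ≤ s' → s' ≤ Qbar / (1 - lam) →
      u s' q ≤ u s q)
    (huR_mono : ∀ Q, ∀ s s' : ℝ, 0 ≤ s → s ≤ s' → s' ≤ Qbar / (1 - lam) →
      uR s' Q ≤ uR s Q)
    (hW_mono : ∀ Q, ∀ s s' : ℝ, 0 ≤ s → s ≤ s' → s' ≤ Qbar / (1 - lam) →
      W s' Q ≤ W s Q) :
    ∀ Q ∈ Set.Icc (0:ℝ) Qbar, ∀ s s' : ℝ,
      0 ≤ s → s ≤ s' → s' ≤ Q / (1 - lam) →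
      bellmanT lam delta P u (fun t => uR t Q) W s' Q
        ≤ bellmanT lam delta P u (fun t => uR t Q) W s Q := by
  obtain ⟨Bu, hBu⟩ := hu_bdd
  obtain ⟨Bw, hBw⟩ := hW_bdd
  obtain ⟨hlam0, hlam1⟩ := hlam
  obtain ⟨hd0, hd1⟩ := hdelta
  intro Q hQ s s' hs0 hss' hs'Q
  obtain ⟨hQ0, hQbar⟩ := hQ
  have h1lam : (0:ℝ) < 1 - lam := by linarith
  have hden : Q / (1 - lam) ≤ Qbar / (1 - lam) := by gcongr
  have hs'bar : s' ≤ Qbar / (1 - lam) := le_trans hs'Q hden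
  have hs'0 : 0 ≤ s' := le_trans hs0 hss'
  have hs'Q' : s' * (1 - lam) ≤ Q := by
    rw [div_eq_mul_inv] at hs'Q
    calc s' * (1 - lam) ≤ (Q * (1 - lam)⁻¹) * (1 - lam) := by
          exact mul_le_mul_of_nonneg_right hs'Q (le_of_lt h1lam)
      _ = Q := by field_simp
  have hkey : ∀ q, 0 ≤ q → q ≤ Q → lam * s' + q ≤ Qbar / (1 - lam) := by
    intro q hq0 hqQ
    rw [le_div_iff₀ h1lam]
    nlinarith
  -- the candidate sets
  set A : ℝ → Set ℝ := fun t => {v : ℝ | ∃ q ∈ Set.Icc (0:ℝ) Q,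
      v = (1 - P t) * (u t q + delta * W (lam * t + q) Q)
        + P t * (u t Q + delta * W (lam * t + Q) Q)} with hA
  have hAne : ∀ t, (A t).Nonempty := fun t =>
    ⟨_, ⟨0, ⟨le_refl 0, hQ0⟩, rfl⟩⟩
  have hbdd : ∀ t, BddAbove (A t) := by
    intro t
    refine ⟨Bu + delta * Bw, ?_⟩
    rintro v ⟨q, hq, rfl⟩
    have h1 : u t q ≤ Bu := le_trans (le_abs_self _) (hBu t q)
    have h2 : u t Q ≤ Bu := le_trans (le_abs_self _) (hBu t Q)
    have h3 : W (lam * t + q) Q ≤ Bw := le_trans (le_abs_self _) (hBw _ _)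
    have h4 : W (lam * t + Q) Q ≤ Bw := le_trans (le_abs_self _) (hBw _ _)
    have hp := hP t
    have hA1 : u t q + delta * W (lam * t + q) Q ≤ Bu + delta * Bw := by nlinarith
    have hA2 : u t Q + delta * W (lam * t + Q) Q ≤ Bu + delta * Bw := by nlinarith
    nlinarith [mul_le_mul_of_nonneg_left hA1 (by linarith [hp.2] : (0:ℝ) ≤ 1 - P t),
      mul_le_mul_of_nonneg_left hA2 hp.1]
  have hsup : sSup (A s') ≤ sSup (A s) := by
    apply csSup_le (hAne s')
    rintro v ⟨q, hq, rfl⟩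
    have hkq := hkey q hq.1 hq.2
    have hkQ := hkey Q (le_refl 0 |>.trans hQ0) (le_refl Q)
    have ha' : u s' q + delta * W (lam * s' + q) Q
        ≤ u s q + delta * W (lam * s + q) Q := by
      have h1 := hu_mono q s s' hs0 hss' hs'bar
      have h2 := hW_mono Q (lam * s + q) (lam * s' + q)
        (by nlinarith [hq.1]) (by nlinarith) hkq
      nlinarith
    have hb' : u s' Q + delta * W (lam * s' + Q) Q
        ≤ u s Q + delta * W (lam * s + Q) Q := by
      have h1 := hu_mono Q s s' hs0 hss' hs'bar
      have h2 := hW_mono Q (lam * s + Q) (lam * s' + Q)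
        (by nlinarith) (by nlinarith) hkQ
      nlinarith
    have hp := hP s
    have hp' := hP s'
    have hpp' := hPmono s s' hs0 hss' hs'bar
    have step1 : (1 - P s') * (u s' q + delta * W (lam * s' + q) Q)
        + P s' * (u s' Q + delta * W (lam * s' + Q) Q)
        ≤ (1 - P s') * (u s q + delta * W (lam * s + q) Q)
        + P s' * (u s Q + delta * W (lam * s + Q) Q) := by
      exact combo_mono _ _ _ _ _ hp'.1 hp'.2 ha' hb'
    rcases le_total (u s Q + delta * W (lam * s + Q) Q)
        (u s q + delta * W (lam * s + q) Q) with hba | hab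
    · have mem : (1 - P s) * (u s q + delta * W (lam * s + q) Q)
          + P s * (u s Q + delta * W (lam * s + Q) Q) ∈ A s := ⟨q, hq, rfl⟩
      have h5 : (1 - P s') * (u s q + delta * W (lam * s + q) Q)
          + P s' * (u s Q + delta * W (lam * s + Q) Q)
          ≤ (1 - P s) * (u s q + delta * W (lam * s + q) Q)
          + P s * (u s Q + delta * W (lam * s + Q) Q) := by
        exact combo_shift _ _ _ _ hpp' hba
      exact le_trans step1 (le_trans h5 (le_csSup (hbdd s) mem))
    · have mem : (1 - P s) * (u s Q + delta * W (lam * s + Q) Q)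
          + P s * (u s Q + delta * W (lam * s + Q) Q) ∈ A s :=
        ⟨Q, ⟨hQ0, le_refl Q⟩, rfl⟩
      have h5 : (1 - P s') * (u s q + delta * W (lam * s + q) Q)
          + P s' * (u s Q + delta * W (lam * s + Q) Q)
          ≤ (1 - P s) * (u s Q + delta * W (lam * s + Q) Q)
          + P s * (u s Q + delta * W (lam * s + Q) Q) := by
        exact combo_top _ _ _ _ hp'.2 hab
      exact le_trans step1 (le_trans h5 (le_csSup (hbdd s) mem))
  have hR : uR s' Q + delta * W (lam * s') Q ≤ uR s Q + delta * W (lam * s) Q := by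
    have h1 := huR_mono Q s s' hs0 hss' hs'bar
    have h2 := hW_mono Q (lam * s) (lam * s')
      (by nlinarith) (by nlinarith)
      (le_trans (by nlinarith) hs'bar)
    nlinarith
  exact max_le_max hsup hR
end

section
/- Let u : S × [0,Q̄] → ℝ with S = [0, Q̄/(1-λ)] compact, and suppose u(s,·) attains its maximum on [0,Q̄] at some q̄ and is non-increasing for q ≥ q̄, for all s. If W : D → ℝ is non-increasing in s and non-increasing in Q for Q ≥ q̄, then for q̄ ≤ Q < Q' (with (s,Q),(s,Q') ∈ D): sup_{q∈[0,Q]}[u(s,q)+δW(λs+q,Q)] ≥ sup_{q∈[0,Q']}[u(s,q)+δW(λs+q,Q')]. That is, widening the feasible interval beyond q̄ cannot increase the value, because any maximizer for limit Q' lies in [0,q̄] ⊆ [0,Q] and W is non-increasing in Q. -/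
/-- Widening the feasible interval beyond `q̄` cannot increase the value:
if `u(s,·)` attains its maximum at `q̄` and is non-increasing beyond `q̄`, and
`W` is non-increasing in `s` and non-increasing in `Q` for `Q ≥ q̄`, then for
`q̄ ≤ Q < Q'` the maximized objective with limit `Q` dominates that with
limit `Q'`. -/
theorem value_antitone_in_limit (lam delta Qbar qbar : ℝ)
    (hlam : lam ∈ Set.Ioo (0:ℝ) 1) (hdelta : delta ∈ Set.Ioo (0:ℝ) 1)
    (hqbar : qbar ∈ Set.Icc (0:ℝ) Qbar)
    (u : ℝ → ℝ → ℝ) (W : ℝ → ℝ → ℝ)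
    (hu_max : ∀ s ∈ Set.Icc (0:ℝ) (Qbar / (1 - lam)),
      ∀ q ∈ Set.Icc (0:ℝ) Qbar, u s q ≤ u s qbar)
    (hu_dec : ∀ s ∈ Set.Icc (0:ℝ) (Qbar / (1 - lam)),
      ∀ q q' : ℝ, qbar ≤ q → q ≤ q' → q' ≤ Qbar → u s q' ≤ u s q)
    (hW_s : ∀ Q, ∀ s s' : ℝ, 0 ≤ s → s ≤ s' → s' ≤ Qbar / (1 - lam) →
      W s' Q ≤ W s Q)
    (hW_Q : ∀ s, ∀ Q Q' : ℝ, qbar ≤ Q → Q ≤ Q' → Q' ≤ Qbar →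
      W s Q' ≤ W s Q)
    (s Q Q' : ℝ) (hQ : qbar ≤ Q) (hQQ' : Q < Q')
    (hmemQ : 0 ≤ Q ∧ Q ≤ Qbar ∧ 0 ≤ s ∧ s ≤ Q / (1 - lam))
    (hmemQ' : 0 ≤ Q' ∧ Q' ≤ Qbar ∧ 0 ≤ s ∧ s ≤ Q' / (1 - lam)) :
    sSup {v : ℝ | ∃ q ∈ Set.Icc (0:ℝ) Q', v = u s q + delta * W (lam * s + q) Q'}
      ≤ sSup {v : ℝ | ∃ q ∈ Set.Icc (0:ℝ) Q, v = u s q + delta * W (lam * s + q) Q} := by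
  obtain ⟨hlam0, hlam1⟩ := hlam
  obtain ⟨hd0, _⟩ := hdelta
  obtain ⟨hQ0, hQb, hs0, hsQ⟩ := hmemQ
  obtain ⟨hQ'0, hQ'b, _, hsQ'⟩ := hmemQ'
  have h1l : (0:ℝ) < 1 - lam := by linarith
  have hsb : s ≤ Qbar / (1 - lam) := le_trans hsQ (by
    gcongr)
  -- membership of s in S
  have hsS : s ∈ Set.Icc (0:ℝ) (Qbar / (1 - lam)) := ⟨hs0, hsb⟩
  -- For q ∈ [0, Q'], lam*s + q is in [0, Qbar/(1-lam)]
  have hls0 : 0 ≤ lam * s := by positivity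
  have key : ∀ q, 0 ≤ q → q ≤ Q' → lam * s + q ≤ Qbar / (1 - lam) := by
    intro q hq0 hqQ'
    have h1 : s * (1 - lam) ≤ Q' := by
      rwa [le_div_iff₀ h1l] at hsQ'
    rw [le_div_iff₀ h1l]
    nlinarith
  -- the Q-set is bounded above
  set SQ := {v : ℝ | ∃ q ∈ Set.Icc (0:ℝ) Q, v = u s q + delta * W (lam * s + q) Q} with hSQ
  have hbdd : BddAbove SQ := by
    refine ⟨u s qbar + delta * W 0 Q, ?_⟩
    rintro v ⟨q, ⟨hq0, hqQ⟩, rfl⟩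
    have h1 : u s q ≤ u s qbar := hu_max s hsS q ⟨hq0, le_trans hqQ hQb⟩
    have h2 : W (lam * s + q) Q ≤ W 0 Q :=
      hW_s Q 0 (lam * s + q) le_rfl (by linarith) (key q hq0 (by linarith))
    nlinarith
  have hne : {v : ℝ | ∃ q ∈ Set.Icc (0:ℝ) Q', v = u s q + delta * W (lam * s + q) Q'}.Nonempty :=
    ⟨u s 0 + delta * W (lam * s + 0) Q', 0, ⟨le_rfl, by linarith⟩, rfl⟩
  refine csSup_le hne ?_
  rintro v ⟨q, ⟨hq0, hqQ'⟩, rfl⟩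
  by_cases hcase : q ≤ Q
  · -- same q works
    have h2 : W (lam * s + q) Q' ≤ W (lam * s + q) Q :=
      hW_Q (lam * s + q) Q Q' hQ hQQ'.le hQ'b
    have hmem : u s q + delta * W (lam * s + q) Q ∈ SQ := ⟨q, ⟨hq0, hcase⟩, rfl⟩
    have := le_csSup hbdd hmem
    nlinarith
  · push_neg at hcase
    have h1 : u s q ≤ u s Q := hu_dec s hsS Q q hQ hcase.le (le_trans hqQ' hQ'b)
    have h2 : W (lam * s + q) Q' ≤ W (lam * s + Q) Q' :=
      hW_s Q' (lam * s + Q) (lam * s + q) (by linarith) (by linarith)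
        (key q hq0 hqQ')
    have h3 : W (lam * s + Q) Q' ≤ W (lam * s + Q) Q :=
      hW_Q (lam * s + Q) Q Q' hQ hQQ'.le hQ'b
    have hmem : u s Q + delta * W (lam * s + Q) Q ∈ SQ := ⟨Q, ⟨hQ0, le_rfl⟩, rfl⟩
    have := le_csSup hbdd hmem
    nlinarith
end
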